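/- For every additive subgroup A of ℚ² with ℤ² ⊆ A ⊆ ℚ², there exists a 2×2 matrix x over the profinite integers Ẑ such that A = A_x, where A_x = {v ∈ ℚ² : x·v ∈ Ẑ²}. -/

import Mathlib

set_option maxHeartbeats 1000000
set_option synthInstance.maxHeartbeats 1000000


noncomputable section
open scoped TensorProduct

instance (p : Nat.Primes) : Fact (p : ℕ).Prime := ⟨p.2⟩

/-- The profinite integers `Ẑ = ∏_p ℤ_p`. -/
abbrev ZHat : Type := ∀ p : Nat.Primes, ℤ_[(p : ℕ)]

/-- The finite adele ring `𝔸_f = Ẑ ⊗ ℚ` of `ℚ`. -/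
abbrev AF : Type := ZHat ⊗[ℤ] ℚ

/-- The embedding `Ẑ ⊆ 𝔸_f`. -/
def iZ : ZHat →+* AF := Algebra.TensorProduct.includeLeftRingHom

/-- The diagonal embedding `ℚ ⊆ 𝔸_f`. -/
def iQ : ℚ →+* AF :=
  (Algebra.TensorProduct.includeRight (R := ℤ) (A := ZHat) (B := ℚ)).toRingHom

/-- For `x ∈ M₂(Ẑ)`, the subgroup `A_x = {v ∈ ℚ² : x·v ∈ Ẑ²}` of `ℚ²`, the condition
being computed in `𝔸_f²` via the embeddings `ℚ ⊆ 𝔸_f` and `Ẑ ⊆ 𝔸_f`. -/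
def Ax (x : Matrix (Fin 2) (Fin 2) ZHat) : AddSubgroup (Fin 2 → ℚ) where
  carrier := {v | ∀ i, (x.map iZ).mulVec (fun j => iQ (v j)) i ∈ iZ.range}
  zero_mem' := by
    intro i
    have : (fun j => iQ ((0 : Fin 2 → ℚ) j)) = (0 : Fin 2 → AF) := by
      funext j; exact iQ.map_zero
    rw [this, Matrix.mulVec_zero]
    exact zero_mem _
  add_mem' := by
    intro v w hv hw i
    have : (fun j => iQ ((v + w) j)) = (fun j => iQ (v j)) + (fun j => iQ (w j)) := by
      funext j; exact iQ.map_add (v j) (w j)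
    rw [this, Matrix.mulVec_add]
    exact add_mem (hv i) (hw i)
  neg_mem' := by
    intro v hv i
    have : (fun j => iQ ((-v) j)) = -(fun j => iQ (v j)) := by
      funext j; exact iQ.map_neg (v j)
    rw [this, Matrix.mulVec_neg]
    exact neg_mem (hv i)


section Aux


open Finset in
lemma fda {p : ℕ} (hp : p ≠ 0) {e : ℕ} (S' : AddSubgroup (Fin 2 → ℤ))
    (hcont : ∀ a : Fin 2 → ℤ, (fun i => (p:ℤ)^e * a i) ∈ S')
    {b : Fin 2 → ℤ} (hb : b ∉ S') :
    ∃ r : Fin 2 → ℤ, (∀ a ∈ S', (p:ℤ)^e ∣ ∑ j, r j * a j) ∧ ¬ (p:ℤ)^e ∣ ∑ j, r j * b j := by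
  classical
  set N : Submodule ℤ (Fin 2 → ℤ) := AddSubgroup.toIntSubmodule S' with hN
  obtain ⟨o, bM, bN, f, a, snf⟩ := N.smithNormalForm (Pi.basisFun ℤ (Fin 2))
  set d : Fin 2 → ℤ := fun i => if h : ∃ k, f k = i then a h.choose else 0 with hd
  have hdeq : ∀ (k : Fin o), d (f k) = a k := by
    intro k
    have h : ∃ k', f k' = f k := ⟨k, rfl⟩
    have : h.choose = k := f.injective h.choose_spec
    simp [hd, dif_pos h, this]
  have key1 : ∀ m ∈ N, ∀ i, d i ∣ bM.repr m i := by
    intro m hm i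
    have hrepr : m = ∑ k, (bN.repr ⟨m, hm⟩ k * a k) • bM (f k) := by
      have h1 : ((∑ k, bN.repr ⟨m, hm⟩ k • bN k : N) : Fin 2 → ℤ) = m :=
        congrArg Subtype.val (bN.sum_repr ⟨m, hm⟩)
      conv_lhs => rw [← h1]
      push_cast
      refine Finset.sum_congr rfl fun k _ => ?_
      rw [snf k, mul_smul]
    have : bM.repr m i = ∑ k, (bN.repr ⟨m, hm⟩ k * a k) * (if f k = i then 1 else 0) := by
      conv_lhs => rw [hrepr]
      rw [map_sum, Finsupp.finset_sum_apply]
      refine Finset.sum_congr rfl fun k _ => ?_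
      rw [map_smul, Module.Basis.repr_self, Finsupp.smul_apply, Finsupp.single_apply, smul_eq_mul]
    rw [this]
    refine Finset.dvd_sum fun k _ => ?_
    by_cases h : f k = i
    · rw [if_pos h, mul_one, ← h, hdeq]
      exact Dvd.intro_left _ rfl
    · rw [if_neg h, mul_zero]
      exact dvd_zero _
  have key2 : ∀ i, d i ∣ (p:ℤ)^e := by
    intro i
    have hm : (fun j => (p:ℤ)^e * (bM i) j) ∈ S' := hcont (bM i)
    have hm' : ((p:ℤ)^e • bM i) ∈ N := by
      have : ((p:ℤ)^e • bM i) = (fun j => (p:ℤ)^e * (bM i) j) := by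
        funext j; simp [Pi.smul_apply, smul_eq_mul]
      rw [this]; exact hm
    have := key1 _ hm' i
    rwa [map_smul, Finsupp.smul_apply, Module.Basis.repr_self, Finsupp.single_apply, if_pos rfl,
      smul_eq_mul, mul_one] at this
  have key3 : ∃ i₀, ¬ d i₀ ∣ bM.repr b i₀ := by
    by_contra h
    push_neg at h
    apply hb
    have : b ∈ N := by
      have hsum : b = ∑ i, bM.repr b i • bM i := (bM.sum_repr b).symm
      rw [hsum]
      refine Submodule.sum_mem N fun i _ => ?_
      obtain ⟨c, hc⟩ := h i
      by_cases hex : ∃ k, f k = i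
      · obtain ⟨k, hk⟩ := hex
        have : bM.repr b i • bM i = c • (bN k : Fin 2 → ℤ) := by
          rw [snf k, hk, hc, ← hk, hdeq, mul_comm, mul_smul]
        rw [this]
        exact Submodule.smul_mem N c (bN k).2
      · have : d i = 0 := by simp [hd, dif_neg hex]
        rw [hc, this, zero_mul, zero_smul]
        exact Submodule.zero_mem N
    exact this
  obtain ⟨i₀, hi₀⟩ := key3
  obtain ⟨q, hq⟩ := key2 i₀
  have hq0 : q ≠ 0 := by
    intro h
    rw [h, mul_zero] at hq
    exact pow_ne_zero e (by exact_mod_cast hp) hq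
  have hdot : ∀ v : Fin 2 → ℤ, ∑ j, (q * bM.repr (Pi.single j 1) i₀) * v j
      = q * bM.repr v i₀ := by
    intro v
    have hv : v = ∑ j, v j • Pi.single j (1:ℤ) := by
      funext i
      rw [Finset.sum_apply]
      simp [Pi.single_apply]
    conv_rhs => rw [hv]
    rw [map_sum, Finsupp.finset_sum_apply, Finset.mul_sum]
    refine Finset.sum_congr rfl fun j _ => ?_
    rw [map_smul, Finsupp.smul_apply, smul_eq_mul]
    ring
  refine ⟨fun j => q * bM.repr (Pi.single j 1) i₀, ?_, ?_⟩
  · intro v hv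
    rw [hdot]
    obtain ⟨c, hc⟩ := key1 v hv i₀
    exact ⟨c, by rw [hc, hq]; ring⟩
  · rw [hdot]
    rintro ⟨c, hc⟩
    apply hi₀
    refine ⟨c, mul_left_cancel₀ hq0 ?_⟩
    rw [hc, hq]; ring

section LocalPart
variable {p : ℕ} [hp : Fact p.Prime]

lemma pint_dvd_iff_norm (e : ℕ) (z : ℤ_[p]) :
    (p:ℤ_[p])^e ∣ z ↔ ‖z‖ ≤ (p:ℝ)^(-(e:ℤ)) := by
  rw [PadicInt.norm_le_pow_iff_mem_span_pow, Ideal.mem_span_singleton]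

lemma pint_dvd_int_iff (e : ℕ) (t : ℤ) :
    (p:ℤ_[p])^e ∣ (t : ℤ_[p]) ↔ (p:ℤ)^e ∣ t := by
  rw [pint_dvd_iff_norm, PadicInt.norm_int_le_pow_iff_dvd]

lemma isClosed_dvd (e : ℕ) : IsClosed {w : ℤ_[p] | (p:ℤ_[p])^e ∣ w} := by
  have : {w : ℤ_[p] | (p:ℤ_[p])^e ∣ w} = norm ⁻¹' (Set.Iic ((p:ℝ)^(-(e:ℤ)))) := by
    ext w; simp [pint_dvd_iff_norm]
  rw [this]
  exact IsClosed.preimage continuous_norm isClosed_Iic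

lemma isClosed_not_dvd (e : ℕ) : IsClosed {w : ℤ_[p] | ¬ (p:ℤ_[p])^e ∣ w} := by
  have : {w : ℤ_[p] | ¬ (p:ℤ_[p])^e ∣ w} = norm ⁻¹' (Set.Ici ((p:ℝ)^(-(e:ℤ)+1))) := by
    ext w
    simp only [Set.mem_setOf_eq, Set.mem_preimage, Set.mem_Ici]
    rw [pint_dvd_iff_norm, PadicInt.norm_le_pow_iff_norm_lt_pow_add_one, not_lt]
  rw [this]
  exact IsClosed.preimage continuous_norm isClosed_Ici

end LocalPart

section LocalPart2
variable {p : ℕ} [hp : Fact p.Prime]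


lemma claim2 (S : ℕ → AddSubgroup (Fin 2 → ℤ))
    (hmul : ∀ e (b : Fin 2 → ℤ), b ∈ S e ↔ (fun i => (p:ℤ) * b i) ∈ S (e+1))
    (hcont : ∀ e (a : Fin 2 → ℤ), (fun i => (p:ℤ)^e * a i) ∈ S e)
    (e : ℕ) (b : Fin 2 → ℤ) (hb : b ∉ S e) :
    ∃ r : Fin 2 → ℤ_[p],
      (∀ l (a : Fin 2 → ℤ), a ∈ S l → (p:ℤ_[p])^l ∣ ∑ j, r j * (a j : ℤ_[p])) ∧
      ¬ (p:ℤ_[p])^e ∣ ∑ j, r j * (b j : ℤ_[p]) := by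
  classical
  have hp0 : (p:ℤ) ≠ 0 := by exact_mod_cast hp.1.ne_zero
  -- iterated version of hmul
  have hmulk : ∀ (k : ℕ) (l : ℕ) (c : Fin 2 → ℤ),
      c ∈ S l ↔ (fun i => (p:ℤ)^k * c i) ∈ S (l+k) := by
    intro k
    induction k with
    | zero => intro l c; simp
    | succ k ih =>
      intro l c
      rw [ih l c, hmul (l+k) (fun i => (p:ℤ)^k * c i)]
      have : (fun i => (p:ℤ) * ((p:ℤ)^k * c i)) = (fun i => (p:ℤ)^(k+1) * c i) := by
        funext i; ring
      rw [this]
      rfl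
  -- the sequence from fda
  have hseq : ∀ m : ℕ, ∃ r : Fin 2 → ℤ,
      (∀ a ∈ S (e+m), (p:ℤ)^(e+m) ∣ ∑ j, r j * a j) ∧
      ¬ (p:ℤ)^e ∣ ∑ j, r j * b j := by
    intro m
    have hbm : (fun i => (p:ℤ)^m * b i) ∉ S (e+m) := fun h => hb ((hmulk m e b).mpr h)
    obtain ⟨r, hr1, hr2⟩ := fda (Nat.Prime.ne_zero hp.1) (S (e+m)) (hcont (e+m)) hbm
    refine ⟨r, hr1, fun hdvd => hr2 ?_⟩
    have : ∑ j, r j * ((p:ℤ)^m * b j) = (p:ℤ)^m * ∑ j, r j * b j := by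
      rw [Finset.mul_sum]; exact Finset.sum_congr rfl fun j _ => by ring
    rw [this, pow_add, mul_comm ((p:ℤ)^e)]
    exact mul_dvd_mul_left _ hdvd
  choose ρ hρ1 hρ2 using hseq
  -- key divisibility at every level l for each m with l ≤ e + m
  have hρ1' : ∀ m l, l ≤ e + m → ∀ a ∈ S l, (p:ℤ)^l ∣ ∑ j, ρ m j * a j := by
    intro m l hl a ha
    set k := (e+m) - l with hk
    have hlk : l + k = e + m := by omega
    have ha' : (fun i => (p:ℤ)^k * a i) ∈ S (e+m) := by
      rw [← hlk]; exact (hmulk k l a).mp ha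
    have := hρ1 m _ ha'
    have heq : ∑ j, ρ m j * ((p:ℤ)^k * a j) = (p:ℤ)^k * ∑ j, ρ m j * a j := by
      rw [Finset.mul_sum]; exact Finset.sum_congr rfl fun j _ => by ring
    rw [heq, ← hlk, pow_add, mul_comm ((p:ℤ)^l)] at this
    exact (mul_dvd_mul_iff_left (pow_ne_zero k hp0)).mp this
  -- compactness
  set x : ℕ → (Fin 2 → ℤ_[p]) := fun m j => ((ρ m j : ℤ_[p])) with hx
  obtain ⟨r, -, φ, hφmono, hφ⟩ :=
    isCompact_univ.tendsto_subseq (x := x) (fun m => Set.mem_univ _)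
  refine ⟨r, ?_, ?_⟩
  · intro l a ha
    have hgcont : Continuous (fun z : Fin 2 → ℤ_[p] => ∑ j, z j * (a j : ℤ_[p])) := by
      exact continuous_finset_sum _ fun j _ => (continuous_apply j).mul continuous_const
    have htend : Filter.Tendsto (fun k => ∑ j, x (φ k) j * (a j : ℤ_[p]))
        Filter.atTop (nhds (∑ j, r j * (a j : ℤ_[p]))) :=
      (hgcont.tendsto r).comp hφ
    refine (isClosed_dvd l).mem_of_tendsto htend ?_
    rw [Filter.eventually_atTop]
    refine ⟨l, fun k hk => ?_⟩
    have hle : l ≤ e + φ k := le_trans (le_trans hk (hφmono.le_apply)) (Nat.le_add_left _ _)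
    have := hρ1' (φ k) l hle a ha
    have hcast : ∑ j, x (φ k) j * (a j : ℤ_[p]) = ((∑ j, ρ (φ k) j * a j : ℤ) : ℤ_[p]) := by
      push_cast [hx]; rfl
    rw [Set.mem_setOf_eq, hcast]
    exact (pint_dvd_int_iff l _).mpr this
  · have hgcont : Continuous (fun z : Fin 2 → ℤ_[p] => ∑ j, z j * (b j : ℤ_[p])) := by
      exact continuous_finset_sum _ fun j _ => (continuous_apply j).mul continuous_const
    have htend : Filter.Tendsto (fun k => ∑ j, x (φ k) j * (b j : ℤ_[p]))
        Filter.atTop (nhds (∑ j, r j * (b j : ℤ_[p]))) :=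
      (hgcont.tendsto r).comp hφ
    refine (isClosed_not_dvd e).mem_of_tendsto htend ?_
    refine Filter.Eventually.of_forall fun k => ?_
    have := hρ2 (φ k)
    have hcast : ∑ j, x (φ k) j * (b j : ℤ_[p]) = ((∑ j, ρ (φ k) j * b j : ℤ) : ℤ_[p]) := by
      push_cast [hx]; rfl
    rw [Set.mem_setOf_eq, hcast, pint_dvd_int_iff e]
    exact this

lemma local_spec (S : ℕ → AddSubgroup (Fin 2 → ℤ))
    (hmul : ∀ e (b : Fin 2 → ℤ), b ∈ S e ↔ (fun i => (p:ℤ) * b i) ∈ S (e+1))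
    (hcont : ∀ e (a : Fin 2 → ℤ), (fun i => (p:ℤ)^e * a i) ∈ S e) :
    ∃ y : Matrix (Fin 2) (Fin 2) ℤ_[p],
      ∀ e (a : Fin 2 → ℤ), a ∈ S e ↔ ∀ i, (p:ℤ_[p])^e ∣ ∑ j, y i j * (a j : ℤ_[p]) := by
  classical
  set T : Submodule ℤ_[p] (Fin 2 → ℤ_[p]) :=
    { carrier := {r | ∀ l, ∀ a ∈ S l, (p:ℤ_[p])^l ∣ ∑ j, r j * (a j : ℤ_[p])}
      add_mem' := by
        intro r s hr hs l a ha
        have : ∑ j, (r + s) j * (a j : ℤ_[p])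
            = (∑ j, r j * (a j : ℤ_[p])) + ∑ j, s j * (a j : ℤ_[p]) := by
          rw [← Finset.sum_add_distrib]
          exact Finset.sum_congr rfl fun j _ => by simp [add_mul]
        rw [this]
        exact dvd_add (hr l a ha) (hs l a ha)
      zero_mem' := by
        intro l a ha
        simp
      smul_mem' := by
        intro c r hr l a ha
        have : ∑ j, (c • r) j * (a j : ℤ_[p]) = c * ∑ j, r j * (a j : ℤ_[p]) := by
          rw [Finset.mul_sum]
          exact Finset.sum_congr rfl fun j _ => by simp [mul_assoc]
        rw [this]
        exact (hr l a ha).mul_left c } with hT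
  obtain ⟨o, bM, bN, f, aa, snf⟩ := T.smithNormalForm (Pi.basisFun ℤ_[p] (Fin 2))
  have ho : o ≤ 2 := by
    have := Fintype.card_le_of_embedding f
    simpa using this
  set y : Matrix (Fin 2) (Fin 2) ℤ_[p] :=
    fun i j => if h : (i:ℕ) < o then (bN ⟨(i:ℕ), h⟩ : Fin 2 → ℤ_[p]) j else 0 with hy
  refine ⟨y, fun e a => ⟨fun ha i => ?_, fun hdvd => ?_⟩⟩
  · by_cases h : (i:ℕ) < o
    · have hmem : (bN ⟨(i:ℕ), h⟩ : Fin 2 → ℤ_[p]) ∈ T := (bN ⟨(i:ℕ), h⟩).2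
      have : ∀ j, y i j = (bN ⟨(i:ℕ), h⟩ : Fin 2 → ℤ_[p]) j := fun j => by
        rw [hy]; exact dif_pos h
      simp only [this]
      exact hmem e a ha
    · have : ∀ j, y i j = 0 := fun j => by rw [hy]; exact dif_neg h
      simp [this]
  · by_contra ha
    obtain ⟨r, hr1, hr2⟩ := claim2 S hmul hcont e a ha
    have hrT : r ∈ T := fun l a' ha' => hr1 l a' ha'
    apply hr2
    have hrepr : r = ∑ k, bN.repr ⟨r, hrT⟩ k • (bN k : Fin 2 → ℤ_[p]) := by
      have h1 : ((∑ k, bN.repr ⟨r, hrT⟩ k • bN k : T) : Fin 2 → ℤ_[p]) = r :=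
        congrArg Subtype.val (bN.sum_repr ⟨r, hrT⟩)
      conv_lhs => rw [← h1]
      push_cast
      rfl
    have hsum : ∑ j, r j * (a j : ℤ_[p])
        = ∑ k, bN.repr ⟨r, hrT⟩ k * ∑ j, (bN k : Fin 2 → ℤ_[p]) j * (a j : ℤ_[p]) := by
      conv_lhs => rw [hrepr]
      have hterm : ∀ j, (∑ k, bN.repr ⟨r, hrT⟩ k • (bN k : Fin 2 → ℤ_[p])) j * (a j : ℤ_[p])
          = ∑ k, bN.repr ⟨r, hrT⟩ k * ((bN k : Fin 2 → ℤ_[p]) j * (a j : ℤ_[p])) := by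
        intro j
        rw [Finset.sum_apply, Finset.sum_mul]
        exact Finset.sum_congr rfl fun k _ => by simp [mul_assoc]
      rw [Finset.sum_congr rfl (fun j _ => hterm j), Finset.sum_comm]
      exact Finset.sum_congr rfl fun k _ => (Finset.mul_sum _ _ _).symm
    rw [hsum]
    refine Finset.dvd_sum fun k _ => Dvd.dvd.mul_left ?_ _
    have hk2 : (k:ℕ) < 2 := lt_of_lt_of_le k.2 ho
    have hder := hdvd ⟨(k:ℕ), hk2⟩
    have hyk : ∀ j, y ⟨(k:ℕ), hk2⟩ j = (bN k : Fin 2 → ℤ_[p]) j := by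
      intro j
      rw [hy]
      simp only
      rw [dif_pos (show ((⟨(k:ℕ), hk2⟩ : Fin 2) : ℕ) < o from k.2)]
    simp only [hyk] at hder
    exact hder

end LocalPart2

/-- evaluation of the adeles at a prime `q` -/
def phiAF (q : Nat.Primes) : AF →+* ℚ_[(q:ℕ)] :=
  (Algebra.TensorProduct.productMap
    ((PadicInt.Coe.ringHom.comp (Pi.evalRingHom _ q)).toIntAlgHom)
    ((Rat.castHom ℚ_[(q:ℕ)]).toIntAlgHom)).toRingHom

lemma phiAF_iZ (q : Nat.Primes) (z : ZHat) : phiAF q (iZ z) = ((z q : ℚ_[(q:ℕ)])) := by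
  simp only [phiAF, iZ, AlgHom.toRingHom_eq_coe, RingHom.coe_coe,
    Algebra.TensorProduct.includeLeftRingHom_apply,
    Algebra.TensorProduct.productMap_apply_tmul, map_one, mul_one]
  rfl

lemma phiAF_iQ (q : Nat.Primes) (r : ℚ) : phiAF q (iQ r) = (r : ℚ_[(q:ℕ)]) := by
  simp only [phiAF, iQ, AlgHom.toRingHom_eq_coe, RingHom.coe_coe,
    Algebra.TensorProduct.includeRight_apply,
    Algebra.TensorProduct.productMap_apply_tmul, map_one, one_mul]
  rfl

lemma range_iff (z : ZHat) (N : ℕ) (hN : N ≠ 0) :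
    iZ z * iQ ((N:ℚ)⁻¹) ∈ iZ.range ↔ ∀ q : Nat.Primes, ((N : ℤ_[(q:ℕ)]) ∣ z q) := by
  constructor
  · rintro ⟨w, hw⟩ q
    have h := congrArg (phiAF q) hw
    rw [map_mul, phiAF_iZ, phiAF_iQ, phiAF_iZ] at h
    have hN0 : ((N:ℚ_[(q:ℕ)])) ≠ 0 := by exact_mod_cast hN
    have hkey : (z q : ℚ_[(q:ℕ)]) = (((N : ℤ_[(q:ℕ)]) * w q : ℤ_[(q:ℕ)]) : ℚ_[(q:ℕ)]) := by
      push_cast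
      push_cast at h
      rw [h]
      field_simp
    exact ⟨w q, Subtype.coe_injective hkey⟩
  · intro h
    choose w hw using h
    refine ⟨(fun q => w q), ?_⟩
    have hz : z = (N : ZHat) * (fun q => w q) := by
      funext q
      rw [Pi.mul_apply, Pi.natCast_apply]
      exact hw q
    have h1 : ((N : AF) * iQ ((N:ℚ)⁻¹)) = 1 := by
      rw [← map_natCast iQ N, ← map_mul,
        mul_inv_cancel₀ (by exact_mod_cast hN : ((N:ℚ)) ≠ 0), map_one]
    rw [hz, map_mul, map_natCast iZ, mul_comm ((N:AF)), mul_assoc, h1, mul_one]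

lemma mulVec_eq (x : Matrix (Fin 2) (Fin 2) ZHat) (N : ℕ) (a : Fin 2 → ℤ) (i : Fin 2) :
    (x.map iZ).mulVec (fun j => iQ ((a j : ℚ) * (N:ℚ)⁻¹)) i
      = iZ (∑ j, x i j * ((a j : ℤ) : ZHat)) * iQ ((N:ℚ)⁻¹) := by
  have hms : iZ (∑ j, x i j * ((a j : ℤ) : ZHat)) = ∑ j, iZ (x i j * ((a j:ℤ):ZHat)) :=
    map_sum iZ _ _
  rw [Matrix.mulVec, dotProduct, hms, Finset.sum_mul]
  refine Finset.sum_congr rfl fun j _ => ?_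
  rw [Matrix.map_apply, map_mul iQ, map_mul iZ, map_intCast iZ, ← mul_assoc]
  congr 1
  rw [map_intCast iQ]

lemma mem_Ax_carrier (x : Matrix (Fin 2) (Fin 2) ZHat) (N : ℕ) (hN : N ≠ 0) (a : Fin 2 → ℤ) :
    (∀ i, (x.map iZ).mulVec (fun j => iQ (((fun k => (a k : ℚ) * (N:ℚ)⁻¹) j))) i ∈ iZ.range) ↔
    ∀ (i : Fin 2) (q : Nat.Primes),
      ((N : ℤ_[(q:ℕ)]) ∣ ∑ j, x i j q * ((a j : ℤ) : ℤ_[(q:ℕ)])) := by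
  have hcoord : ∀ (i : Fin 2) (q : Nat.Primes),
      (∑ j, x i j * ((a j : ℤ) : ZHat)) q = ∑ j, x i j q * ((a j : ℤ) : ℤ_[(q:ℕ)]) := by
    intro i q
    rw [Finset.sum_apply]
    exact Finset.sum_congr rfl fun j _ => by rw [Pi.mul_apply, Pi.intCast_apply]
  constructor
  · intro h i q
    have := h i
    rw [mulVec_eq x N a i, range_iff _ N hN] at this
    have h2 := this q
    rwa [hcoord i q] at h2
  · intro h i
    rw [mulVec_eq x N a i, range_iff _ N hN]
    intro q
    rw [hcoord i q]
    exact h i q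

def divHom (c : ℚ) : (Fin 2 → ℤ) →+ (Fin 2 → ℚ) where
  toFun a := fun i => (a i : ℚ) * c
  map_zero' := by funext i; simp
  map_add' a b := by
    funext i
    simp only [Pi.add_apply]
    push_cast
    ring

lemma unit_of_not_dvd {q : ℕ} [Fact q.Prime] {N : ℕ} (h : ¬ q ∣ N) : IsUnit (N : ℤ_[q]) := by
  rw [PadicInt.isUnit_iff]
  refine le_antisymm (PadicInt.norm_le_one _) ?_
  by_contra hlt
  push_neg at hlt
  have : ‖((N:ℤ) : ℤ_[q])‖ < 1 := by push_cast; exact hlt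
  rw [PadicInt.norm_int_lt_one_iff_dvd] at this
  exact h (by exact_mod_cast this)


theorem exists_matrix_realizing_subgroup (A : AddSubgroup (Fin 2 → ℚ))
    (hA : ∀ n : Fin 2 → ℤ, (fun i => (n i : ℚ)) ∈ A) :
    ∃ x : Matrix (Fin 2) (Fin 2) ZHat, A = Ax x := by
  classical
  -- local data at each prime
  have hspec : ∀ q : Nat.Primes, ∃ y : Matrix (Fin 2) (Fin 2) ℤ_[(q:ℕ)],
      ∀ e (a : Fin 2 → ℤ),
        ((fun i => (a i : ℚ) * ((((q:ℕ):ℚ))^e)⁻¹) ∈ A) ↔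
        ∀ i, (((q:ℕ)):ℤ_[(q:ℕ)])^e ∣ ∑ j, y i j * (a j : ℤ_[(q:ℕ)]) := by
    intro q
    have hq0 : ((q:ℕ):ℚ) ≠ 0 := by exact_mod_cast q.2.ne_zero
    set Sq : ℕ → AddSubgroup (Fin 2 → ℤ) :=
      fun e => A.comap (divHom ((((q:ℕ):ℚ))^e)⁻¹) with hSq
    have hmem : ∀ e (a : Fin 2 → ℤ),
        a ∈ Sq e ↔ (fun i => (a i : ℚ) * ((((q:ℕ):ℚ))^e)⁻¹) ∈ A := by
      intro e a
      rw [hSq]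
      rfl
    have hmul : ∀ e (b : Fin 2 → ℤ), b ∈ Sq e ↔
        (fun i => ((q:ℕ):ℤ) * b i) ∈ Sq (e+1) := by
      intro e b
      rw [hmem, hmem]
      have : (fun i => (((((q:ℕ):ℤ) * b i : ℤ)) : ℚ) * ((((q:ℕ):ℚ))^(e+1))⁻¹)
          = (fun i => (b i : ℚ) * ((((q:ℕ):ℚ))^e)⁻¹) := by
        funext i
        push_cast
        field_simp
        try ring
      rw [this]
    have hcont : ∀ e (a : Fin 2 → ℤ), (fun i => ((q:ℕ):ℤ)^e * a i) ∈ Sq e := by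
      intro e a
      rw [hmem]
      have : (fun i => ((((q:ℕ):ℤ)^e * a i : ℤ) : ℚ) * ((((q:ℕ):ℚ))^e)⁻¹)
          = fun i => (a i : ℚ) := by
        funext i
        push_cast
        field_simp
        try ring
      rw [this]
      exact hA a
    obtain ⟨y, hy⟩ := local_spec Sq hmul hcont
    exact ⟨y, fun e a => by rw [← hmem]; exact hy e a⟩
  choose y hy using hspec
  refine ⟨fun i j => fun q => y q i j, ?_⟩
  set x : Matrix (Fin 2) (Fin 2) ZHat := fun i j => fun q => y q i j with hxdef
  -- the key induction on denominators
  have key : ∀ N : ℕ, N ≠ 0 → ∀ a : Fin 2 → ℤ,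
      ((fun i => (a i:ℚ) * (N:ℚ)⁻¹) ∈ A ↔
        ∀ (i : Fin 2) (q : Nat.Primes), ((N:ℤ_[(q:ℕ)]) ∣ ∑ j, y q i j * (a j : ℤ_[(q:ℕ)]))) := by
    intro N
    induction N using Nat.strong_induction_on with
    | _ N IH =>
    intro hN0 a
    rcases eq_or_ne N 1 with rfl | hN1
    · have hfun : (fun i => (a i:ℚ) * ((1:ℕ):ℚ)⁻¹) = fun i => (a i:ℚ) := by
        funext i; norm_num
      rw [hfun]
      constructor
      · intro _ i q
        norm_num
      · intro _
        exact hA a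
    -- N ≥ 2 : extract the largest power of the least prime factor
    obtain ⟨P, hPp, hPd⟩ : ∃ P, P.Prime ∧ P ∣ N := ⟨N.minFac, Nat.minFac_prime hN1, N.minFac_dvd⟩
    obtain ⟨e, M, hNfac, hndvd, he0⟩ :
        ∃ e M, P ^ e * M = N ∧ ¬ P ∣ M ∧ 0 < e :=
      ⟨N.factorization P, N / P ^ (N.factorization P),
        Nat.ordProj_mul_ordCompl_eq_self N P, Nat.not_dvd_ordCompl hPp hN0,
        Nat.Prime.factorization_pos_of_dvd hPp hN0 hPd⟩
    set q₀ : Nat.Primes := ⟨P, hPp⟩ with hq₀def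
    have hM0 : M ≠ 0 := by
      intro h; rw [h, mul_zero] at hNfac; exact hN0 hNfac.symm
    have hpe0 : P ^ e ≠ 0 := pow_ne_zero _ hPp.ne_zero
    have hpe2 : 2 ≤ P ^ e := le_trans hPp.two_le (Nat.le_self_pow he0.ne' P)
    -- prime power case handler
    have hq₀e : ∀ (q : Nat.Primes) (hq : q = q₀),
        (((P ^ e : ℕ)):ℤ_[(q:ℕ)]) = (((q:ℕ)):ℤ_[(q:ℕ)])^e := by
      rintro q rfl
      push_cast
      rfl
    have ppow : ∀ (b : Fin 2 → ℤ),
        ((fun i => (b i:ℚ) * ((P ^ e : ℕ):ℚ)⁻¹) ∈ A ↔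
          ∀ (i : Fin 2) (q : Nat.Primes),
            (((P ^ e : ℕ):ℤ_[(q:ℕ)]) ∣ ∑ j, y q i j * (b j : ℤ_[(q:ℕ)]))) := by
      intro b
      have hcast : (fun i => (b i:ℚ) * ((P ^ e : ℕ):ℚ)⁻¹)
          = (fun i => (b i:ℚ) * ((((q₀:ℕ):ℚ))^e)⁻¹) := by
        funext i; push_cast; rfl
      rw [hcast, hy q₀ e b]
      constructor
      · intro h i q
        by_cases hq : q = q₀
        · rw [hq₀e q hq, hq]
          exact h i
        · refine (unit_of_not_dvd (q := (q:ℕ)) (N := P ^ e) ?_).dvd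
          intro hdvd
          exact hq (Subtype.ext
            ((Nat.prime_dvd_prime_iff_eq q.2 hPp).mp (q.2.dvd_of_dvd_pow hdvd)))
      · intro h i
        have h2 := h i q₀
        rwa [hq₀e q₀ rfl] at h2
    rcases eq_or_ne M 1 with hM1 | hM1
    · -- N is a prime power
      have hNeq : N = P ^ e := by rw [← hNfac, hM1, mul_one]
      rw [hNeq]
      exact ppow a
    · -- composite: split into coprime parts
      have hM2 : 2 ≤ M := by omega
      have hMlt : M < N := by
        have h1 : 2 * M ≤ N := hNfac ▸ Nat.mul_le_mul_right M hpe2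
        omega
      have hpelt : P ^ e < N := by
        have h1 : P ^ e * 2 ≤ N := hNfac ▸ Nat.mul_le_mul_left (P ^ e) hM2
        omega
      have hcop : Nat.Coprime (P ^ e) M :=
        Nat.Coprime.pow_left e
          (by rwa [Nat.Prime.coprime_iff_not_dvd hPp])
      have hicop : IsCoprime ((P ^ e : ℕ) : ℤ) ((M:ℕ) : ℤ) :=
        Nat.isCoprime_iff_coprime.mpr hcop
      obtain ⟨u, w, huw⟩ := hicop
      set b₁ : Fin 2 → ℤ := fun i => w * a i with hb₁
      set b₂ : Fin 2 → ℤ := fun i => u * a i with hb₂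
      have hQfac : ((P ^ e : ℕ):ℚ) * ((M:ℕ):ℚ) = (N:ℚ) := by
        rw [← hNfac]; push_cast; ring
      have hpeQ : ((P ^ e : ℕ):ℚ) ≠ 0 := by exact_mod_cast hpe0
      have hMQ : ((M:ℕ):ℚ) ≠ 0 := by exact_mod_cast hM0
      have huwQ : (u:ℚ) * ((P ^ e : ℕ):ℚ) + (w:ℚ) * ((M:ℕ):ℚ) = 1 := by
        exact_mod_cast congrArg (Int.cast : ℤ → ℚ) huw
      have hPQ : (P:ℚ) ≠ 0 := by exact_mod_cast hPp.ne_zero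
      push_cast at huwQ
      have hsplitA : ((fun i => (a i:ℚ) * (N:ℚ)⁻¹) ∈ A) ↔
          (((fun i => (b₁ i:ℚ) * ((P ^ e : ℕ):ℚ)⁻¹) ∈ A) ∧
           ((fun i => (b₂ i:ℚ) * ((M:ℕ):ℚ)⁻¹) ∈ A)) := by
        constructor
        · intro h
          constructor
          · have h1 := A.zsmul_mem h (w * (M:ℤ))
            have heq : (w * (M:ℤ)) • (fun i => (a i:ℚ) * (N:ℚ)⁻¹)
                = fun i => (b₁ i:ℚ) * ((P ^ e : ℕ):ℚ)⁻¹ := by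
              funext i
              rw [Pi.smul_apply, zsmul_eq_mul, hb₁]
              rw [← hQfac]
              push_cast
              field_simp
            rwa [heq] at h1
          · have h1 := A.zsmul_mem h (u * ((P ^ e : ℕ):ℤ))
            have heq : (u * ((P ^ e : ℕ):ℤ)) • (fun i => (a i:ℚ) * (N:ℚ)⁻¹)
                = fun i => (b₂ i:ℚ) * ((M:ℕ):ℚ)⁻¹ := by
              funext i
              rw [Pi.smul_apply, zsmul_eq_mul, hb₂]
              rw [← hQfac]
              push_cast
              field_simp
            rwa [heq] at h1
        · rintro ⟨h1, h2⟩
          have h3 := A.add_mem h1 h2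
          have heq : (fun i => (b₁ i:ℚ) * ((P ^ e : ℕ):ℚ)⁻¹)
              + (fun i => (b₂ i:ℚ) * ((M:ℕ):ℚ)⁻¹)
              = fun i => (a i:ℚ) * (N:ℚ)⁻¹ := by
            funext i
            rw [Pi.add_apply, hb₁, hb₂]
            rw [← hQfac]
            push_cast
            field_simp
            linear_combination (a i : ℚ) * huwQ
          rwa [heq] at h3
      rw [hsplitA, IH (P ^ e) hpelt hpe0 b₁, IH M hMlt hM0 b₂]
      constructor
      · rintro ⟨h1, h2⟩ i q
        have hd1 := h1 i q
        have hd2 := h2 i q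
        have hNcast : ((N:ℕ) : ℤ_[(q:ℕ)]) = ((P ^ e : ℕ) : ℤ_[(q:ℕ)]) * ((M:ℕ) : ℤ_[(q:ℕ)]) := by
          rw [← hNfac]; push_cast; ring
        have hsum : ∑ j, y q i j * ((a j : ℤ) : ℤ_[(q:ℕ)])
            = ((P ^ e : ℕ) : ℤ_[(q:ℕ)]) * (∑ j, y q i j * ((b₂ j : ℤ) : ℤ_[(q:ℕ)]))
            + ((M:ℕ) : ℤ_[(q:ℕ)]) * (∑ j, y q i j * ((b₁ j : ℤ) : ℤ_[(q:ℕ)])) := by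
          rw [Finset.mul_sum, Finset.mul_sum, ← Finset.sum_add_distrib]
          refine Finset.sum_congr rfl fun j _ => ?_
          have hZint : (a j : ℤ) = ((P ^ e : ℕ):ℤ) * (b₂ j) + ((M:ℕ):ℤ) * (b₁ j) := by
            simp only [hb₂, hb₁]
            linear_combination (-(a j)) * huw
          rw [show ((a j : ℤ) : ℤ_[(q:ℕ)])
              = ((((P ^ e : ℕ):ℤ) * (b₂ j) + ((M:ℕ):ℤ) * (b₁ j) : ℤ) : ℤ_[(q:ℕ)]) from by
            rw [← hZint]]
          push_cast
          ring
        rw [hsum]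
        exact dvd_add (by rw [hNcast]; exact mul_dvd_mul_left _ hd2)
          (by rw [hNcast, mul_comm]; exact mul_dvd_mul_left _ hd1)
      · intro h
        constructor
        · intro i q
          have hd := h i q
          have hsum : ∑ j, y q i j * ((b₁ j : ℤ) : ℤ_[(q:ℕ)])
              = (w : ℤ_[(q:ℕ)]) * ∑ j, y q i j * ((a j : ℤ) : ℤ_[(q:ℕ)]) := by
            rw [Finset.mul_sum]
            refine Finset.sum_congr rfl fun j _ => ?_
            simp only [hb₁]
            push_cast
            ring
          rw [hsum]
          refine Dvd.dvd.mul_left (dvd_trans ?_ hd) _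
          exact Nat.cast_dvd_cast ⟨M, hNfac.symm⟩
        · intro i q
          have hd := h i q
          have hsum : ∑ j, y q i j * ((b₂ j : ℤ) : ℤ_[(q:ℕ)])
              = (u : ℤ_[(q:ℕ)]) * ∑ j, y q i j * ((a j : ℤ) : ℤ_[(q:ℕ)]) := by
            rw [Finset.mul_sum]
            refine Finset.sum_congr rfl fun j _ => ?_
            simp only [hb₂]
            push_cast
            ring
          rw [hsum]
          refine Dvd.dvd.mul_left (dvd_trans ?_ hd) _
          exact Nat.cast_dvd_cast ⟨P ^ e, by rw [← hNfac, Nat.mul_comm]⟩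
  -- final assembly
  ext v
  have hden : ∃ (N : ℕ) (a : Fin 2 → ℤ), N ≠ 0 ∧ v = fun i => (a i : ℚ) * (N:ℚ)⁻¹ := by
    refine ⟨(v 0).den * (v 1).den,
      fun i => if i = 0 then (v 0).num * (v 1).den else (v 1).num * (v 0).den,
      Nat.mul_ne_zero (v 0).den_nz (v 1).den_nz, ?_⟩
    have h0 : ((v 0).den : ℚ) ≠ 0 := by exact_mod_cast (v 0).den_nz
    have h1 : ((v 1).den : ℚ) ≠ 0 := by exact_mod_cast (v 1).den_nz
    have hv0 : v 0 = (((v 0).num : ℚ) * ((v 1).den : ℚ)) * ((((v 0).den * (v 1).den : ℕ)):ℚ)⁻¹ := by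
      conv_lhs => rw [← Rat.num_div_den (v 0)]
      push_cast
      field_simp
      try ring
    have hv1 : v 1 = (((v 1).num : ℚ) * ((v 0).den : ℚ)) * ((((v 0).den * (v 1).den : ℕ)):ℚ)⁻¹ := by
      conv_lhs => rw [← Rat.num_div_den (v 1)]
      push_cast
      field_simp
      try ring
    funext i
    fin_cases i
    · simpa [Int.cast_mul, Nat.cast_mul] using hv0
    · simpa [Int.cast_mul, Nat.cast_mul] using hv1
  obtain ⟨N, a, hN0, hv⟩ := hden
  rw [hv]
  have hmemAx : ((fun i => (a i : ℚ) * (N:ℚ)⁻¹) ∈ Ax x) ↔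
      ∀ (i : Fin 2) (q : Nat.Primes),
        ((N : ℤ_[(q:ℕ)]) ∣ ∑ j, x i j q * ((a j : ℤ) : ℤ_[(q:ℕ)])) :=
    mem_Ax_carrier x N hN0 a
  rw [hmemAx]
  exact key N hN0 a

end Aux
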